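/- The set dom(∸) = {(x,y) ∈ Γ × Γ : y ≤ x} is a closed up-set in the Priestley space Γ × Γ^op, where Γ carries the topology generated by the sets ↑p° = {x : p° ≤ x} and ↓q⁻ = {x : x ≤ q⁻} for rationals p ∈ [0,1] and q ∈ (0,1]. -/

import Mathlib

open scoped Classical

noncomputable section

/-- Validity predicate: `(r, false)` encodes `r⁻` for `r ∈ (0,1]`;
`(q, true)` encodes `q°` for rational `q ∈ [0,1]`. -/
def GammaValid (x : ℝ × Bool) : Prop :=
  (x.2 = false ∧ 0 < x.1 ∧ x.1 ≤ 1) ∨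
  (x.2 = true ∧ 0 ≤ x.1 ∧ x.1 ≤ 1 ∧ ∃ q : ℚ, (q : ℝ) = x.1)

lemma gammaValid_of (r : ℝ) (b : Bool) (h0 : 0 ≤ r) (h1 : r ≤ 1)
    (hr : b = true → ∃ q : ℚ, (q : ℝ) = r) (hm : b = false → 0 < r) :
    GammaValid (r, b) := by
  cases b
  · exact Or.inl ⟨rfl, hm rfl, h1⟩
  · exact Or.inr ⟨rfl, h0, h1, hr rfl⟩

/-- The doubled unit interval `Γ`, ordered lexicographically:
compare real values first, and `r⁻ < r°` at equal value. -/
abbrev Gamma : Type := {x : Lex (ℝ × Bool) // GammaValid (ofLex x)}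

def Gamma.re (x : Gamma) : ℝ := (ofLex x.1).1
def Gamma.tag (x : Gamma) : Bool := (ofLex x.1).2

def Gamma.mk' (r : ℝ) (b : Bool) (h : GammaValid (r, b)) : Gamma := ⟨toLex (r, b), h⟩

@[simp] lemma Gamma.re_mk' (r : ℝ) (b : Bool) (h : GammaValid (r, b)) :
    (Gamma.mk' r b h).re = r := rfl
@[simp] lemma Gamma.tag_mk' (r : ℝ) (b : Bool) (h : GammaValid (r, b)) :
    (Gamma.mk' r b h).tag = b := rfl

/-- `0°` -/
def gzero : Gamma :=
  Gamma.mk' 0 true (gammaValid_of _ _ le_rfl zero_le_one (fun _ => ⟨0, by norm_num⟩) (by simp))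

/-- `1°` -/
def gone : Gamma :=
  Gamma.mk' 1 true (gammaValid_of _ _ zero_le_one le_rfl (fun _ => ⟨1, by norm_num⟩) (by simp))

/-- `q°` for a rational `q ∈ [0,1]`. -/
def mkCirc (q : ℚ) (h0 : 0 ≤ q) (h1 : q ≤ 1) : Gamma :=
  Gamma.mk' (q : ℝ) true
    (gammaValid_of _ _ (by exact_mod_cast h0) (by exact_mod_cast h1)
      (fun _ => ⟨q, rfl⟩) (by simp))

/-- `r⁻` for a real `r ∈ (0,1]`. -/
def mkMinus (r : ℝ) (h0 : 0 < r) (h1 : r ≤ 1) : Gamma :=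
  Gamma.mk' r false
    (gammaValid_of _ _ h0.le h1 (by simp) (fun _ => h0))

lemma Gamma.le_iff {x y : Gamma} :
    x ≤ y ↔ x.re < y.re ∨ (x.re = y.re ∧ x.tag ≤ y.tag) := by
  change x.1 ≤ y.1 ↔ _
  rw [show x.1 = toLex (ofLex x.1) from rfl, show y.1 = toLex (ofLex y.1) from rfl,
    Prod.Lex.le_iff]
  rfl

lemma Gamma.re_nonneg (x : Gamma) : 0 ≤ x.re := by
  rcases x.2 with ⟨_, h, _⟩ | ⟨_, h, _⟩ <;> [exact le_of_lt h; exact h]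

lemma Gamma.re_le_one (x : Gamma) : x.re ≤ 1 := by
  rcases x.2 with ⟨_, _, h⟩ | ⟨_, _, h, _⟩ <;> exact h

lemma Gamma.tag_rat {x : Gamma} (h : x.tag = true) : ∃ q : ℚ, (q : ℝ) = x.re := by
  rcases x.2 with ⟨h', _⟩ | ⟨_, _, _, hq⟩
  · exact absurd (h'.symm.trans h) (by simp)
  · exact hq

lemma Gamma.tag_pos {x : Gamma} (h : x.tag = false) : 0 < x.re := by
  rcases x.2 with ⟨_, h', _⟩ | ⟨h', _⟩
  · exact h'
  · exact absurd (h'.symm.trans h) (by simp)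

lemma Gamma.re_mono {x y : Gamma} (h : x ≤ y) : x.re ≤ y.re := by
  rcases Gamma.le_iff.1 h with h | ⟨h, _⟩
  · exact le_of_lt h
  · exact le_of_eq h

lemma Gamma.ext' {x y : Gamma} (hre : x.re = y.re) (htag : x.tag = y.tag) : x = y := by
  apply Subtype.ext
  have hx : x.1 = toLex (x.re, x.tag) := rfl
  have hy : y.1 = toLex (y.re, y.tag) := rfl
  rw [hx, hy, hre, htag]

/-- The partial minus `∸` on `Γ`, made total by returning `0°` outside its domain
`{(x,y) | y ≤ x}`.  On the domain:  `r° ∸ s° = (r−s)°`, `r⁻ ∸ s° = (r−s)⁻`, and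
`r° ∸ s⁻ = r⁻ ∸ s⁻ = (r−s)°` if `r−s ∈ ℚ`, `(r−s)⁻` otherwise. -/
def gsub (x y : Gamma) : Gamma :=
  if h : y ≤ x then
    Gamma.mk' (x.re - y.re)
      (if y.tag then x.tag else if (∃ q : ℚ, (q : ℝ) = x.re - y.re) then true else false)
      (by
        have hle : y.re ≤ x.re := Gamma.re_mono h
        have hx1 := x.re_le_one
        have hy0 := y.re_nonneg
        apply gammaValid_of _ _ (by linarith) (by linarith)
        · intro ht
          split_ifs at ht with hy hq
          · obtain ⟨qx, hqx⟩ := Gamma.tag_rat ht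
            obtain ⟨qy, hqy⟩ := Gamma.tag_rat hy
            exact ⟨qx - qy, by push_cast [hqx, hqy]; ring⟩
          · exact hq
        · intro ht
          split_ifs at ht with hy hq
          · rcases Gamma.le_iff.1 h with hlt | ⟨_, htag⟩
            · linarith
            · rw [hy, ht] at htag; exact absurd htag (by decide)
          · refine lt_of_le_of_ne (by linarith) fun e => hq ⟨0, by rw [← e]; norm_num⟩)
  else gzero

/-- The derived operation `∸'` given by `x ∸' y = ⋁ {x ∸ q° ∣ y < q° ≤ x}`,
described here by its explicit formula (and again made total by `0°` off-domain). -/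
def gsub' (x y : Gamma) : Gamma :=
  if h : y ≤ x then
    Gamma.mk' (x.re - y.re)
      (if x.re - y.re = 0 then true
       else if (y.tag = false ∧ ∃ q : ℚ, (q : ℝ) = y.re) then x.tag else false)
      (by
        have hle : y.re ≤ x.re := Gamma.re_mono h
        have hx1 := x.re_le_one
        have hy0 := y.re_nonneg
        apply gammaValid_of _ _ (by linarith) (by linarith)
        · intro ht
          split_ifs at ht with h0 hc
          · exact ⟨0, by rw [h0]; norm_num⟩
          · obtain ⟨qx, hqx⟩ := Gamma.tag_rat ht
            obtain ⟨qy, hqy⟩ := hc.2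
            exact ⟨qx - qy, by push_cast [hqx, hqy]; ring⟩
        · intro ht
          split_ifs at ht with h0 hc
          · exact lt_of_le_of_ne (by linarith) (Ne.symm h0)
          · exact lt_of_le_of_ne (by linarith) (Ne.symm h0))
  else gzero

/-- The partial plus on `Γ` (total, with junk value `0°` when the sum exceeds `1`):
`r° + s° = (r+s)°` and any sum involving a `⁻`-element is a `⁻`-element. -/
def gadd (x y : Gamma) : Gamma :=
  if h : x.re + y.re ≤ 1 then
    Gamma.mk' (x.re + y.re) (x.tag && y.tag)
      (by
        have hx0 := x.re_nonneg
        have hy0 := y.re_nonneg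
        apply gammaValid_of _ _ (by linarith) h
        · intro ht
          rw [Bool.and_eq_true] at ht
          obtain ⟨qx, hqx⟩ := Gamma.tag_rat ht.1
          obtain ⟨qy, hqy⟩ := Gamma.tag_rat ht.2
          exact ⟨qx + qy, by push_cast [hqx, hqy]; ring⟩
        · intro ht
          rcases Bool.and_eq_false_iff.1 ht with hx | hy
          · have := Gamma.tag_pos hx; linarith
          · have := Gamma.tag_pos hy; linarith)
  else gzero

/-- Finite sums in `Γ` (total, with junk value `0°` when the real sum exceeds `1`):
real parts add up, and the result is a `°`-element iff every summand is. -/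
def gsum {α : Type*} (s : Finset α) (f : α → Gamma) : Gamma :=
  if h : ∑ x ∈ s, (f x).re ≤ 1 then
    Gamma.mk' (∑ x ∈ s, (f x).re) (if ∀ x ∈ s, (f x).tag = true then true else false)
      (by
        have h0 : 0 ≤ ∑ x ∈ s, (f x).re :=
          Finset.sum_nonneg fun x _ => (f x).re_nonneg
        apply gammaValid_of _ _ h0 h
        · intro ht
          split_ifs at ht with hall
          · have : ∀ x ∈ s, ∃ q : ℚ, (q : ℝ) = (f x).re := fun x hx => Gamma.tag_rat (hall x hx)
            choose g hg using this
            refine ⟨∑ x ∈ s.attach, g x.1 x.2, ?_⟩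
            push_cast
            rw [← Finset.sum_attach s fun x => (f x).re]
            exact Finset.sum_congr rfl fun x _ => hg x.1 x.2
        · intro ht
          split_ifs at ht with hall
          · push_neg at hall
            obtain ⟨x, hxs, hx⟩ := hall
            replace hx : (f x).tag = false := by
              cases hxt : (f x).tag
              · rfl
              · exact absurd hxt hx
            calc (0:ℝ) < (f x).re := Gamma.tag_pos hx
              _ ≤ _ := Finset.single_le_sum (fun y _ => (f y).re_nonneg) hxs)
  else gzero

/-- The collapsing map `γ : Γ → [0,1]`, `r⁻, r° ↦ r`. -/
def gammaMap (x : Gamma) : unitInterval := ⟨x.re, x.re_nonneg, x.re_le_one⟩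

/-- The section `ι : [0,1] → Γ`: rationals go to `°`-elements, irrationals to `⁻`-elements. -/
def iota (r : unitInterval) : Gamma :=
  if h : ∃ q : ℚ, (q : ℝ) = r.1 then
    Gamma.mk' r.1 true (gammaValid_of _ _ r.2.1 r.2.2 (fun _ => h) (by simp))
  else
    Gamma.mk' r.1 false
      (gammaValid_of _ _ r.2.1 r.2.2 (by simp)
        (fun _ => lt_of_le_of_ne r.2.1 fun e => h ⟨0, by rw [← e]; norm_num⟩))

/-- Subbasis for the Priestley topology on `Γ`: the sets `↑p°` (for `p ∈ ℚ ∩ [0,1]`) and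
`↓q⁻` (for `q ∈ ℚ ∩ (0,1]`). -/
def gammaSubbasis : Set (Set Gamma) :=
  {S | ∃ x : Gamma, x.tag = true ∧ S = Set.Ici x} ∪
  {S | ∃ x : Gamma, x.tag = false ∧ (∃ q : ℚ, (q : ℝ) = x.re) ∧ S = Set.Iic x}

instance : TopologicalSpace Gamma := TopologicalSpace.generateFrom gammaSubbasis

/-- `Γ`-valued (finitely additive, probability) measures on a bounded lattice `D`. -/
def IsGMeasure {D : Type*} [Lattice D] [BoundedOrder D] (μ : D → Gamma) : Prop :=
  μ ⊥ = gzero ∧ μ ⊤ = gone ∧ Monotone μ ∧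
  ∀ a b : D, gsub' (μ a) (μ (a ⊓ b)) ≤ gsub (μ (a ⊔ b)) (μ b) ∧
    gsub' (μ (a ⊔ b)) (μ b) ≤ gsub (μ a) (μ (a ⊓ b))

/-- Classical finitely additive probability measures on a bounded lattice `D`. -/
def IsCMeasure {D : Type*} [Lattice D] [BoundedOrder D] (m : D → ℝ) : Prop :=
  m ⊥ = 0 ∧ m ⊤ = 1 ∧ Monotone m ∧
  ∀ a b : D, m a + m b = m (a ⊔ b) + m (a ⊓ b)


lemma isOpen_Ici_circ (q : ℚ) (h0 : 0 ≤ q) (h1 : q ≤ 1) :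
    IsOpen (Set.Ici (mkCirc q h0 h1)) :=
  TopologicalSpace.GenerateOpen.basic _ (Or.inl ⟨mkCirc q h0 h1, rfl, rfl⟩)

lemma isOpen_Iic_minus (q : ℚ) (h0 : 0 < (q : ℝ)) (h1 : (q : ℝ) ≤ 1) :
    IsOpen (Set.Iic (mkMinus q h0 h1)) :=
  TopologicalSpace.GenerateOpen.basic _ (Or.inr ⟨mkMinus q h0 h1, rfl, ⟨q, rfl⟩, rfl⟩)

lemma gamma_sep {x y : Gamma} (h : x < y) :
    ∃ V W : Set Gamma, IsOpen V ∧ IsOpen W ∧ x ∈ V ∧ y ∈ W ∧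
      ∀ x' ∈ V, ∀ y' ∈ W, ¬ y' ≤ x' := by
  rcases lt_or_eq_of_le (Gamma.re_mono h.le) with hre | hre
  · -- x.re < y.re: separate with a rational strictly in between
    obtain ⟨q, hq1, hq2⟩ := exists_rat_btwn hre
    have hq0 : 0 < (q : ℝ) := lt_of_le_of_lt x.re_nonneg hq1
    have hq1' : (q : ℝ) ≤ 1 := le_trans hq2.le y.re_le_one
    have hq0' : 0 ≤ q := by exact_mod_cast hq0.le
    have hq1'' : q ≤ 1 := by exact_mod_cast hq1'
    refine ⟨Set.Iic (mkMinus q hq0 hq1'), Set.Ici (mkCirc q hq0' hq1''),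
      isOpen_Iic_minus _ _ _, isOpen_Ici_circ _ _ _, ?_, ?_, ?_⟩
    · exact Gamma.le_iff.2 (Or.inl (by simpa [mkMinus] using hq1))
    · exact Gamma.le_iff.2 (Or.inl (by simpa [mkCirc] using hq2))
    · intro x' hx' y' hy' hle
      have h1 : x'.re < (q : ℝ) ∨ (x'.re = q ∧ x'.tag ≤ false) := by
        simpa [mkMinus] using Gamma.le_iff.1 hx'
      have h2 : (q : ℝ) < y'.re ∨ ((q : ℝ) = y'.re ∧ true ≤ y'.tag) := by
        simpa [mkCirc] using Gamma.le_iff.1 hy'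
      have hyx := Gamma.re_mono hle
      have hx'q : x'.re ≤ q := by rcases h1 with h | h; exacts [h.le, h.1.le]
      have hqy' : (q : ℝ) ≤ y'.re := by rcases h2 with h | h; exacts [h.le, h.1.le]
      have hxq : x'.re = q := le_antisymm hx'q (le_trans hqy' hyx)
      have hyq : y'.re = q := le_antisymm (le_trans hyx hx'q) hqy'
      have htx : x'.tag = false := by
        rcases h1 with h | h
        · exact absurd hxq (ne_of_lt h)
        · cases hx : x'.tag
          · rfl
          · rw [hx] at h; exact absurd h.2 (by decide)
      have hty : y'.tag = true := by
        rcases h2 with h | h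
        · exact absurd hyq.symm (ne_of_lt h)
        · cases hy : y'.tag
          · rw [hy] at h; exact absurd h.2 (by decide)
          · rfl
      rcases Gamma.le_iff.1 hle with h | ⟨_, h⟩
      · rw [hxq, hyq] at h; exact lt_irrefl _ h
      · rw [htx, hty] at h; exact absurd h (by decide)
  · -- equal reals: x = r⁻, y = r° with r rational
    have htx : x.tag = false := by
      rcases Gamma.le_iff.1 h.le with h' | ⟨_, h'⟩
      · exact absurd hre (ne_of_lt h')
      · cases hx : x.tag
        · rfl
        · cases hy : y.tag
          · rw [hx, hy] at h'; exact absurd h' (by decide)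
          · exact absurd (Gamma.ext' hre (hx.trans hy.symm)) (ne_of_lt h)
    have hty : y.tag = true := by
      cases hy : y.tag
      · exact absurd (Gamma.ext' hre (htx.trans hy.symm)) (ne_of_lt h)
      · rfl
    obtain ⟨q, hq⟩ := Gamma.tag_rat hty
    have hqx : (q : ℝ) = x.re := hq.trans hre.symm
    have hq0 : 0 < (q : ℝ) := hqx ▸ Gamma.tag_pos htx
    have hq1 : (q : ℝ) ≤ 1 := hqx ▸ x.re_le_one
    have hq0' : 0 ≤ q := by exact_mod_cast hq0.le
    have hq1' : q ≤ 1 := by exact_mod_cast hq1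
    have hxeq : x = mkMinus q hq0 hq1 := Gamma.ext' hqx.symm htx
    have hyeq : y = mkCirc q hq0' hq1' := Gamma.ext' hq.symm hty
    refine ⟨Set.Iic (mkMinus q hq0 hq1), Set.Ici (mkCirc q hq0' hq1'),
      isOpen_Iic_minus _ _ _, isOpen_Ici_circ _ _ _, le_of_eq hxeq, ge_of_eq hyeq, ?_⟩
    intro x' hx' y' hy' hle
    have hlt : ¬ mkCirc q hq0' hq1' ≤ mkMinus q hq0 hq1 := by
      intro hle'
      rcases Gamma.le_iff.1 hle' with h' | ⟨_, h'⟩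
      · simp [mkCirc, mkMinus] at h'
      · simp only [mkCirc, mkMinus, Gamma.tag_mk'] at h'
        exact absurd h' (by decide)
    exact hlt (le_trans (le_trans hy' hle) hx')

/-- the domain `{(x,y) | y ≤ x}` of `∸` is a closed up-set in `Γ × Γᵒᵖ`. -/
theorem dom_gsub_closed_upset :
    IsClosed {p : Gamma × Gammaᵒᵈ | OrderDual.ofDual p.2 ≤ p.1} ∧
    IsUpperSet {p : Gamma × Gammaᵒᵈ | OrderDual.ofDual p.2 ≤ p.1} := by
  constructor
  · rw [← isOpen_compl_iff, isOpen_iff_forall_mem_open]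
    rintro ⟨x, y⟩ hp
    simp only [Set.mem_compl_iff, Set.mem_setOf_eq, not_le] at hp
    obtain ⟨V, W, hV, hW, hxV, hyW, hsep⟩ := gamma_sep hp
    refine ⟨V ×ˢ (OrderDual.ofDual ⁻¹' W), ?_, hV.prod hW, hxV, hyW⟩
    rintro ⟨x', y'⟩ ⟨h1, h2⟩ hmem
    exact hsep x' h1 (OrderDual.ofDual y') h2 hmem
  · rintro ⟨x, y⟩ ⟨x', y'⟩ ⟨h1, h2⟩ h
    simp only [Set.mem_setOf_eq] at h ⊢
    exact le_trans (le_trans h2 h) h1
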